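/- Let F : ℝ → ℝ be an increasing homeomorphism with F(x+1) = F(x)+1, let F_t := F + t, let p, q be coprime integers with q ≥ 1, and suppose {t ∈ ℝ : Trans(F_t) = p/q} = [t^l, t^r] with t^l ≤ t^r. Then: (i) t = t^r if and only if F_t^{∘q}(x) ≥ x + p for all x ∈ ℝ and F_t^{∘q}(x₀) = x₀ + p for some x₀ ∈ ℝ; (ii) t = t^l if and only if F_t^{∘q}(x) ≤ x + p for all x ∈ ℝ and F_t^{∘q}(x₀) = x₀ + p for some x₀ ∈ ℝ; (iii) t^l < t < t^r if and only if the function x ↦ F_t^{∘q}(x) − x − p takes both strictly positive and strictly negative values. -/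

import Mathlib

open Filter Topology Set

/-- `τ` is the translation number of `F`: for every `x`, `(F^[n] x - x)/n → τ`. -/
def IsTransNum (F : ℝ → ℝ) (τ : ℝ) : Prop :=
  ∀ x : ℝ, Filter.Tendsto (fun n : ℕ => (F^[n] x - x) / n) Filter.atTop (nhds τ)

theorem stmt_2 (F : ℝ → ℝ)
    (hFmono : StrictMono F) (hFcont : Continuous F) (hFsurj : Function.Surjective F)
    (hFdeg : ∀ x : ℝ, F (x + 1) = F x + 1)
    (τ : ℝ → ℝ)
    (hτ : ∀ t : ℝ, IsTransNum (fun x => F x + t) (τ t))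
    (p : ℤ) (q : ℕ) (hq : 1 ≤ q) (hpq : Nat.Coprime p.natAbs q)
    (tl tr : ℝ) (hltr : tl ≤ tr)
    (hfiber : {t : ℝ | τ t = (p : ℝ) / (q : ℝ)} = Set.Icc tl tr) :
    -- (i) characterization of the right endpoint
    (∀ t : ℝ, t = tr ↔
      ((∀ x : ℝ, (fun x => F x + t)^[q] x ≥ x + (p : ℝ)) ∧
        ∃ x₀ : ℝ, (fun x => F x + t)^[q] x₀ = x₀ + (p : ℝ))) ∧
    -- (ii) characterization of the left endpoint
    (∀ t : ℝ, t = tl ↔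
      ((∀ x : ℝ, (fun x => F x + t)^[q] x ≤ x + (p : ℝ)) ∧
        ∃ x₀ : ℝ, (fun x => F x + t)^[q] x₀ = x₀ + (p : ℝ))) ∧
    -- (iii) characterization of interior points
    (∀ t : ℝ, (tl < t ∧ t < tr) ↔
      ((∃ x : ℝ, (fun x => F x + t)^[q] x - x - (p : ℝ) > 0) ∧
        ∃ x : ℝ, (fun x => F x + t)^[q] x - x - (p : ℝ) < 0)) := by
  have hq0 : 0 < q := hq
  have hq0' : (0 : ℝ) < (q : ℝ) := by exact_mod_cast hq0
  -- package F + t as a CircleDeg1Lift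
  set f : ℝ → CircleDeg1Lift := fun t =>
    { toFun := fun x => F x + t
      monotone' := fun a b h => by
        dsimp only
        exact add_le_add (hFmono.monotone h) le_rfl
      map_add_one' := fun x => by rw [hFdeg]; ring } with hfdef
  have hcoe : ∀ t, ⇑(f t) = fun x => F x + t := fun t => rfl
  have hcont : ∀ t, Continuous (f t) := fun t => hFcont.add continuous_const
  have hτeq : ∀ t, τ t = CircleDeg1Lift.translationNumber (f t) := by
    intro t
    refine tendsto_nhds_unique (hτ t 0) ?_
    refine ((f t).tendsto_translationNumber 0).congr fun n => ?_
    rw [CircleDeg1Lift.coe_pow]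
    rfl
  -- iterate notation
  have hiterpow : ∀ t (x : ℝ), ((f t) ^ q) x = (fun x => F x + t)^[q] x := by
    intro t x
    rw [CircleDeg1Lift.coe_pow]
    rfl
  have hmem : ∀ t : ℝ, τ t = (p : ℝ) / q ↔ t ∈ Set.Icc tl tr := fun t => Set.ext_iff.mp hfiber t
  -- periodic point criterion
  have hE : ∀ t : ℝ, (∃ x₀ : ℝ, (fun x => F x + t)^[q] x₀ = x₀ + (p : ℝ)) ↔ τ t = (p : ℝ) / q := by
    intro t
    rw [hτeq t, CircleDeg1Lift.translationNumber_eq_rat_iff _ (hcont t) hq0]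
    constructor
    · rintro ⟨x, hx⟩; exact ⟨x, by rw [hiterpow]; exact hx⟩
    · rintro ⟨x, hx⟩; exact ⟨x, by rw [← hiterpow t x]; exact hx⟩
  -- monotonicity of τ in t
  have hmonoτ : ∀ {s t : ℝ}, s ≤ t → τ s ≤ τ t := by
    intro s t h
    rw [hτeq s, hτeq t]
    exact CircleDeg1Lift.translationNumber_mono fun x => by
      show F x + s ≤ F x + t; linarith
  -- one-point inequalities give bounds on τ
  have hle_half : ∀ (t x : ℝ), (fun x => F x + t)^[q] x ≤ x + (p : ℝ) → τ t ≤ (p : ℝ) / q := by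
    intro t x h
    have h1 : ((f t) ^ q) x ≤ x + (p : ℝ) := by rw [hiterpow]; exact h
    have h2 := CircleDeg1Lift.translationNumber_le_of_le_add_int _ h1
    rw [CircleDeg1Lift.translationNumber_pow, ← hτeq t] at h2
    rw [le_div_iff₀ hq0']
    linarith
  have hge_half : ∀ (t x : ℝ), x + (p : ℝ) ≤ (fun x => F x + t)^[q] x → (p : ℝ) / q ≤ τ t := by
    intro t x h
    have h1 : x + (p : ℝ) ≤ ((f t) ^ q) x := by rw [hiterpow]; exact h
    have h2 := CircleDeg1Lift.le_translationNumber_of_add_int_le _ h1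
    rw [CircleDeg1Lift.translationNumber_pow, ← hτeq t] at h2
    rw [div_le_iff₀ hq0']
    linarith [h2]
  -- strict monotonicity of the iterates in t
  have hiter_le : ∀ {s t : ℝ}, s ≤ t → ∀ (n : ℕ) (x : ℝ),
      (fun x => F x + s)^[n] x ≤ (fun x => F x + t)^[n] x := by
    intro s t h n
    induction n with
    | zero => intro x; simp
    | succ n ih =>
      intro x
      simp only [Function.iterate_succ_apply']
      have := hFmono.monotone (ih x)
      linarith
  have hiter_lt : ∀ {s t : ℝ}, s < t → ∀ (x : ℝ),
      (fun x => F x + s)^[q] x < (fun x => F x + t)^[q] x := by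
    intro s t h x
    obtain ⟨n, rfl⟩ : ∃ n, q = n + 1 := ⟨q - 1, (Nat.succ_pred_eq_of_pos hq0).symm⟩
    simp only [Function.iterate_succ_apply']
    have h1 := hFmono.monotone (hiter_le h.le n x)
    linarith
  -- continuity of the iterates in t
  have hcontt : ∀ (x : ℝ) (n : ℕ), Continuous fun t : ℝ => (fun x => F x + t)^[n] x := by
    intro x n
    induction n with
    | zero => simpa using continuous_const
    | succ n ih =>
      have : (fun t : ℝ => (fun x => F x + t)^[n+1] x)
          = fun t : ℝ => F ((fun x => F x + t)^[n] x) + t := by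
        funext t; rw [Function.iterate_succ_apply']
      rw [this]
      exact (hFcont.comp ih).add continuous_id
  -- endpoints are in the fiber
  have hEtr : ∃ x₀ : ℝ, (fun x => F x + tr)^[q] x₀ = x₀ + (p : ℝ) :=
    (hE tr).mpr ((hmem tr).mpr ⟨hltr, le_rfl⟩)
  have hEtl : ∃ x₀ : ℝ, (fun x => F x + tl)^[q] x₀ = x₀ + (p : ℝ) :=
    (hE tl).mpr ((hmem tl).mpr ⟨le_rfl, hltr⟩)
  -- A(tr): F_tr^[q] x ≥ x + p for all x
  have hAtr : ∀ x : ℝ, (fun x => F x + tr)^[q] x ≥ x + (p : ℝ) := by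
    intro x
    by_contra hlt
    push_neg at hlt
    have hev : ∀ᶠ u in 𝓝 tr, (fun x => F x + u)^[q] x < x + (p : ℝ) :=
      (hcontt x q).continuousAt.eventually_lt continuousAt_const hlt
    obtain ⟨t', ht'lt, ht'⟩ : ∃ t', (fun x => F x + t')^[q] x < x + (p : ℝ) ∧ tr < t' := by
      have := (hev.filter_mono nhdsWithin_le_nhds).and
        (eventually_mem_nhdsWithin (s := Set.Ioi tr))
      rcases this.exists with ⟨t', h1, h2⟩
      exact ⟨t', h1, h2⟩
    have h1 : τ t' ≤ (p : ℝ) / q := hle_half t' x ht'lt.le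
    have h2 : (p : ℝ) / q ≤ τ t' := ((hmem tr).mpr ⟨hltr, le_rfl⟩) ▸ hmonoτ ht'.le
    have : t' ∈ Set.Icc tl tr := (hmem t').mp (le_antisymm h1 h2)
    exact absurd this.2 (not_le.mpr ht')
  -- B(tl): F_tl^[q] x ≤ x + p for all x
  have hBtl : ∀ x : ℝ, (fun x => F x + tl)^[q] x ≤ x + (p : ℝ) := by
    intro x
    by_contra hlt
    push_neg at hlt
    have hev : ∀ᶠ u in 𝓝 tl, x + (p : ℝ) < (fun x => F x + u)^[q] x :=
      continuousAt_const.eventually_lt (hcontt x q).continuousAt hlt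
    obtain ⟨t', ht'lt, ht'⟩ : ∃ t', x + (p : ℝ) < (fun x => F x + t')^[q] x ∧ t' < tl := by
      have := (hev.filter_mono nhdsWithin_le_nhds).and
        (eventually_mem_nhdsWithin (s := Set.Iio tl))
      rcases this.exists with ⟨t', h1, h2⟩
      exact ⟨t', h1, h2⟩
    have h1 : (p : ℝ) / q ≤ τ t' := hge_half t' x ht'lt.le
    have h2 : τ t' ≤ (p : ℝ) / q := ((hmem tl).mpr ⟨le_rfl, hltr⟩) ▸ hmonoτ ht'.le
    have : t' ∈ Set.Icc tl tr := (hmem t').mp (le_antisymm h2 h1)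
    exact absurd this.1 (not_le.mpr ht')
  -- claim (i)
  have claimR : ∀ t : ℝ, t = tr ↔
      ((∀ x : ℝ, (fun x => F x + t)^[q] x ≥ x + (p : ℝ)) ∧
        ∃ x₀ : ℝ, (fun x => F x + t)^[q] x₀ = x₀ + (p : ℝ)) := by
    intro t
    constructor
    · rintro rfl; exact ⟨hAtr, hEtr⟩
    · rintro ⟨hA, hEx⟩
      have htmem : t ∈ Set.Icc tl tr := (hmem t).mp ((hE t).mp hEx)
      rcases lt_or_eq_of_le htmem.2 with hlt | h
      · exfalso
        obtain ⟨x₀, hx₀⟩ := hEtr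
        have := hiter_lt hlt x₀
        have := hA x₀
        linarith [hx₀ ▸ this]
      · exact h
  -- claim (ii)
  have claimL : ∀ t : ℝ, t = tl ↔
      ((∀ x : ℝ, (fun x => F x + t)^[q] x ≤ x + (p : ℝ)) ∧
        ∃ x₀ : ℝ, (fun x => F x + t)^[q] x₀ = x₀ + (p : ℝ)) := by
    intro t
    constructor
    · rintro rfl; exact ⟨hBtl, hEtl⟩
    · rintro ⟨hB, hEx⟩
      have htmem : t ∈ Set.Icc tl tr := (hmem t).mp ((hE t).mp hEx)
      rcases lt_or_eq_of_le htmem.1 with hlt | h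
      · exfalso
        obtain ⟨x₀, hx₀⟩ := hEtl
        have h1 := hiter_lt hlt x₀
        have h2 := hB x₀
        rw [hx₀] at h1
        linarith
      · exact h.symm
  refine ⟨claimR, claimL, ?_⟩
  -- claim (iii)
  intro t
  constructor
  · rintro ⟨h1, h2⟩
    have htmem : t ∈ Set.Icc tl tr := ⟨h1.le, h2.le⟩
    have hEx := (hE t).mpr ((hmem t).mpr htmem)
    constructor
    · by_contra hno
      push_neg at hno
      have hB : ∀ x : ℝ, (fun x => F x + t)^[q] x ≤ x + (p : ℝ) := fun x => by
        have := hno x; linarith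
      exact absurd ((claimL t).mpr ⟨hB, hEx⟩) h1.ne'
    · by_contra hno
      push_neg at hno
      have hA : ∀ x : ℝ, (fun x => F x + t)^[q] x ≥ x + (p : ℝ) := fun x => by
        have := hno x; linarith
      exact absurd ((claimR t).mpr ⟨hA, hEx⟩) h2.ne
  · rintro ⟨⟨a, ha⟩, ⟨b, hb⟩⟩
    -- IVT gives a fixed point, hence t ∈ Icc tl tr
    have hcg : Continuous fun x : ℝ => (fun x => F x + t)^[q] x - x - (p : ℝ) :=
      (((hcont t).iterate q).sub continuous_id).sub continuous_const
    have h0 : (0:ℝ) ∈ Set.Icc ((fun x : ℝ => (fun x => F x + t)^[q] x - x - (p : ℝ)) b)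
        ((fun x : ℝ => (fun x => F x + t)^[q] x - x - (p : ℝ)) a) := ⟨hb.le, ha.le⟩
    obtain ⟨c, hc⟩ := intermediate_value_univ b a hcg h0
    have hEx : ∃ x₀ : ℝ, (fun x => F x + t)^[q] x₀ = x₀ + (p : ℝ) := ⟨c, by dsimp at hc; linarith⟩
    have htmem : t ∈ Set.Icc tl tr := (hmem t).mp ((hE t).mp hEx)
    constructor
    · rcases lt_or_eq_of_le htmem.1 with h | h
      · exact h
      · exfalso
        have := ((claimL t).mp h.symm).1 a
        linarith
    · rcases lt_or_eq_of_le htmem.2 with h | h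
      · exact h
      · exfalso
        have := ((claimR t).mp h).1 b
        linarith
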